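/- There exists a universal constant p₀ ∈ (0,1) with p₀ ≥ 0.15 such that, if (C1), (C2) and (C3) hold and h ≤ 1/L, then for the coupling of Euler transition steps, π(x,y) ≥ p₀·1_{r≤√h} for all x, y ∈ ℝ^d, where r = |x−y|. -/

import Mathlib

open MeasureTheory ProbabilityTheory Set
open scoped ENNReal Classical RealInnerProductSpace

noncomputable section

/-- Euclidean state space `ℝ^d`. -/
abbrev Ed (d : ℕ) := EuclideanSpace ℝ (Fin d)

/-- The standard Gaussian measure `N(0, I_d)` on `ℝ^d`. -/
def stdGaussian (d : ℕ) : Measure (Ed d) :=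
  (Measure.pi fun _ : Fin d => gaussianReal 0 1).map
    (MeasurableEquiv.toLp 2 (Fin d → ℝ))

/-- The uniform distribution on the unit interval. -/
def unif01 : Measure ℝ := volume.restrict (Set.Ioc (0:ℝ) 1)

variable {d : ℕ}

/-- The deterministic part of the Euler step: `x̂ = x + h·b(x)`. -/
def hatPt (h : ℝ) (b : Ed d → Ed d) (x : Ed d) : Ed d := x + h • b x

/-- Density ratio `φ_{ŷ,hI}(w) / φ_{x̂,hI}(w)` of the Gaussian transition densities. -/
def densRatio (h : ℝ) (xh yh w : Ed d) : ℝ :=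
  Real.exp ((‖w - xh‖ ^ 2 - ‖w - yh‖ ^ 2) / (2 * h))

/-- The reflected point `Y'_refl = ŷ + √h (I − 2êêᵀ) z`, where `ê` is the unit vector in
direction `x̂ − ŷ` (and `ê = 0` if `x̂ = ŷ`). -/
def reflPt (h : ℝ) (xh yh z : Ed d) : Ed d :=
  yh + Real.sqrt h •
    (z - (2 * ⟪‖xh - yh‖⁻¹ • (xh - yh), z⟫) • (‖xh - yh‖⁻¹ • (xh - yh)))

/-- The coupling map: given the noise `z` and the uniform variable `u`, it returns
`X' = x̂ + √h z` and `Y' = X'` if `u ≤ φ_{ŷ,hI}(X')/φ_{x̂,hI}(X')`, `Y' = Y'_refl`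
otherwise. -/
def cplMap (h : ℝ) (b : Ed d → Ed d) (x y : Ed d) (zu : Ed d × ℝ) : Ed d × Ed d :=
  (hatPt h b x + Real.sqrt h • zu.1,
    if zu.2 ≤ densRatio h (hatPt h b x) (hatPt h b y) (hatPt h b x + Real.sqrt h • zu.1)
    then hatPt h b x + Real.sqrt h • zu.1
    else reflPt h (hatPt h b x) (hatPt h b y) zu.1)

/-- The law of the coupled pair `(X', Y')` of Euler transition steps from `x` and `y`. -/
def cplMeasure (h : ℝ) (b : Ed d → Ed d) (x y : Ed d) : Measure (Ed d × Ed d) :=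
  ((stdGaussian d).prod unif01).map (cplMap h b x y)

/-- `β(x,y) = E_{x,y}[R' − r]`. -/
def betaE (h : ℝ) (b : Ed d → Ed d) (x y : Ed d) : ℝ :=
  ∫ w, (‖w.1 - w.2‖ - ‖x - y‖) ∂(cplMeasure h b x y)

/-- `β̂(x,y) = E_{x,y}[R' − r̂]`. -/
def betaHat (h : ℝ) (b : Ed d → Ed d) (x y : Ed d) : ℝ :=
  ∫ w, (‖w.1 - w.2‖ - ‖hatPt h b x - hatPt h b y‖) ∂(cplMeasure h b x y)

/-- `u(s) = √h·1_{s<√h}`. -/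
def uFun (h s : ℝ) : ℝ := if s < Real.sqrt h then Real.sqrt h else 0

/-- `l(s) = √h·1_{s≥√h}`. -/
def lFun (h s : ℝ) : ℝ := if s < Real.sqrt h then 0 else Real.sqrt h

/-- `α(x,y) = E_{x,y}[(((R'−r) ∧ u(r)) ∨ (−l(r)))²]`. -/
def alphaE (h : ℝ) (b : Ed d → Ed d) (x y : Ed d) : ℝ :=
  ∫ w, (max (min (‖w.1 - w.2‖ - ‖x - y‖) (uFun h ‖x - y‖)) (-(lFun h ‖x - y‖))) ^ 2
    ∂(cplMeasure h b x y)

/-- `α̂(x,y) = E_{x,y}[(((R'−r̂) ∧ u(r̂)) ∨ (−l(r̂)))²]`. -/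
def alphaHat (h : ℝ) (b : Ed d → Ed d) (x y : Ed d) : ℝ :=
  ∫ w, (max (min (‖w.1 - w.2‖ - ‖hatPt h b x - hatPt h b y‖)
      (uFun h ‖hatPt h b x - hatPt h b y‖)) (-(lFun h ‖hatPt h b x - hatPt h b y‖))) ^ 2
    ∂(cplMeasure h b x y)

/-- `π(x,y) = P_{x,y}[R' = 0] = P_{x,y}[X' = Y']`. -/
def piE (h : ℝ) (b : Ed d → Ed d) (x y : Ed d) : ℝ :=
  ((cplMeasure h b x y) {w | w.1 = w.2}).toReal

/-- (C1) one-sided Lipschitz condition. -/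
def CondC1 (b : Ed d → Ed d) (J : ℝ) : Prop :=
  ∀ x y : Ed d, ⟪x - y, b x - b y⟫ ≤ J * ‖x - y‖ ^ 2

/-- (C2) strict contractivity outside a ball of radius `𝓡`. -/
def CondC2 (b : Ed d → Ed d) (K 𝓡 : ℝ) : Prop :=
  ∀ x y : Ed d, 𝓡 ≤ ‖x - y‖ → ⟪x - y, b x - b y⟫ ≤ -K * ‖x - y‖ ^ 2

/-- (C3) global Lipschitz condition. -/
def CondC3 (b : Ed d → Ed d) (L : ℝ) : Prop :=
  ∀ x y : Ed d, ‖b x - b y‖ ≤ L * ‖x - y‖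

/-- Standard normal density `φ_{0,1}`. -/
def stdNormalPdf (t : ℝ) : ℝ := (Real.sqrt (2 * Real.pi))⁻¹ * Real.exp (-(t ^ 2) / 2)


/-! ### Auxiliary lemmas -/

section AuxNum
open Real intervalIntegral

lemma exp_le_of_pow (m n : ℕ) (q : ℝ) (hn : 0 < n) (hq : 0 ≤ q)
    (h : (2.7182818286:ℝ)^m ≤ q^n) : Real.exp ((m:ℝ)/n) ≤ q := by
  have h1 : Real.exp ((m:ℝ)/n) ^ n = Real.exp m := by
    rw [← Real.exp_nat_mul]
    congr 1
    field_simp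
  have h2 : Real.exp (m:ℝ) = Real.exp 1 ^ m := by
    rw [← Real.exp_nat_mul, mul_one]
  have h3 : Real.exp ((m:ℝ)/n) ^ n ≤ q ^ n := by
    rw [h1, h2]
    exact le_trans (pow_le_pow_left₀ (Real.exp_pos 1).le Real.exp_one_lt_d9.le m) h
  exact le_of_pow_le_pow_left₀ hn.ne' hq h3

lemma sqrt_two_pi_le : Real.sqrt (2 * Real.pi) ≤ 2.5067 := by
  have h : (2:ℝ) * Real.pi ≤ 2.5067^2 := by
    have := Real.pi_lt_d6
    norm_num
    nlinarith
  calc Real.sqrt (2 * Real.pi) ≤ Real.sqrt (2.5067^2) := Real.sqrt_le_sqrt h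
    _ = 2.5067 := Real.sqrt_sq (by norm_num)

lemma pdf_formula (x : ℝ) :
    gaussianPDFReal 0 1 x = (Real.sqrt (2 * Real.pi))⁻¹ * Real.exp (-(x^2)/2) := by
  rw [gaussianPDFReal]
  norm_num

lemma pdf_lb (a c x : ℝ) (hc : 0 ≤ c)
    (h1 : c * (Real.sqrt (2 * Real.pi) * Real.exp (a^2/2)) ≤ 1)
    (hx : 0 ≤ 1 + (a^2 - x^2)/2) :
    c * (1 + (a^2 - x^2)/2) ≤ gaussianPDFReal 0 1 x := by
  have hS : (0:ℝ) < Real.sqrt (2 * Real.pi) := Real.sqrt_pos.mpr (by positivity)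
  have key : 1 + (a^2 - x^2)/2 ≤ Real.exp (a^2/2) * Real.exp (-(x^2)/2) := by
    rw [← Real.exp_add]
    have := Real.add_one_le_exp ((a^2 - x^2)/2)
    have heq : a^2/2 + -(x^2)/2 = (a^2 - x^2)/2 := by ring
    rw [heq]
    linarith
  have step1 : c * (1 + (a^2 - x^2)/2) ≤ c * (Real.exp (a^2/2) * Real.exp (-(x^2)/2)) :=
    mul_le_mul_of_nonneg_left key hc
  have step2 : c * (Real.exp (a^2/2) * Real.exp (-(x^2)/2))
      ≤ (Real.sqrt (2 * Real.pi))⁻¹ * Real.exp (-(x^2)/2) := by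
    rw [← mul_assoc]
    refine mul_le_mul_of_nonneg_right ?_ (Real.exp_pos _).le
    rw [inv_eq_one_div, le_div_iff₀ hS]
    nlinarith [Real.exp_pos (a^2/2)]
  rw [pdf_formula]
  linarith

lemma piece (a l r c : ℝ) (hlr : l ≤ r) (hc : 0 ≤ c)
    (h1 : c * (Real.sqrt (2 * Real.pi) * Real.exp (a^2/2)) ≤ 1)
    (hval : ∀ x ∈ Set.Icc l r, 0 ≤ 1 + (a^2 - x^2)/2) :
    c * ((1 + a^2/2)*(r - l) - (r^3 - l^3)/6) ≤ ∫ x in l..r, gaussianPDFReal 0 1 x := by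
  have hcont : Continuous (gaussianPDFReal 0 1) := by
    have : Continuous fun x : ℝ => (Real.sqrt (2 * Real.pi))⁻¹ * Real.exp (-(x^2)/2) := by
      fun_prop
    exact (funext pdf_formula : gaussianPDFReal 0 1 = _) ▸ this
  have hint : ∫ x in l..r, (c + c*a^2/2 + (-c/2) * x^2) =
      c*((1 + a^2/2)*(r - l) - (r^3 - l^3)/6) := by
    rw [intervalIntegral.integral_add (f := fun _ => c + c*a^2/2)
      (g := fun x : ℝ => (-c/2) * x^2) intervalIntegrable_const
      ((continuous_const.mul (continuous_pow 2)).intervalIntegrable _ _),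
      intervalIntegral.integral_const_mul, integral_pow, intervalIntegral.integral_const]
    push_cast [smul_eq_mul]
    ring
  calc c * ((1 + a^2/2)*(r - l) - (r^3 - l^3)/6)
      = ∫ x in l..r, (c + c*a^2/2 + (-c/2) * x^2) := hint.symm
    _ ≤ ∫ x in l..r, gaussianPDFReal 0 1 x := by
        refine intervalIntegral.integral_mono_on hlr
          ((continuous_const.add (continuous_const.mul (continuous_pow 2))).intervalIntegrable _ _)
          (hcont.intervalIntegrable _ _) (fun x hx => ?_)
        have := pdf_lb a c x hc h1 (hval x hx)
        calc c + c*a^2/2 + (-c/2) * x^2 = c * (1 + (a^2 - x^2)/2) := by ring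
          _ ≤ _ := this


lemma h1_helper (a c q : ℝ) (hc : 0 ≤ c) (hq : Real.exp (a^2/2) ≤ q)
    (hcq : c * (2.5067 * q) ≤ 1) :
    c * (Real.sqrt (2 * Real.pi) * Real.exp (a^2/2)) ≤ 1 := by
  have h2 : Real.sqrt (2 * Real.pi) * Real.exp (a^2/2) ≤ 2.5067 * q :=
    mul_le_mul sqrt_two_pi_le hq (Real.exp_pos _).le (by norm_num)
  exact le_trans (mul_le_mul_of_nonneg_left h2 hc) hcq

lemma tail_int : (0.15:ℝ) ≤ ∫ x in Set.Iic (-1:ℝ), gaussianPDFReal 0 1 x := by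
  have hcont : Continuous (gaussianPDFReal 0 1) := by
    have : Continuous fun x : ℝ => (Real.sqrt (2 * Real.pi))⁻¹ * Real.exp (-(x^2)/2) := by
      fun_prop
    exact (funext pdf_formula : gaussianPDFReal 0 1 = _) ▸ this
  have hii : ∀ a b : ℝ, IntervalIntegrable (gaussianPDFReal 0 1) volume a b :=
    fun a b => hcont.intervalIntegrable a b
  -- exponential bounds
  have e1 : Real.exp ((1:ℝ)^2/2) ≤ 1.64873 := by
    have := exp_le_of_pow 1 2 1.64873 (by norm_num) (by norm_num) (by norm_num)
    convert this using 2; norm_num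
  have e2 : Real.exp ((1.5:ℝ)^2/2) ≤ 3.0803 := by
    have := exp_le_of_pow 9 8 3.0803 (by norm_num) (by norm_num) (by norm_num)
    convert this using 2; norm_num
  have e3 : Real.exp ((2:ℝ)^2/2) ≤ 7.389057 := by
    have := exp_le_of_pow 2 1 7.389057 (by norm_num) (by norm_num) (by norm_num)
    convert this using 2; norm_num
  have e4 : Real.exp ((2.5:ℝ)^2/2) ≤ 22.761 := by
    have := exp_le_of_pow 25 8 22.761 (by norm_num) (by norm_num) (by norm_num)
    convert this using 2; norm_num
  have e5 : Real.exp ((3:ℝ)^2/2) ≤ 90.018 := by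
    have := exp_le_of_pow 9 2 90.018 (by norm_num) (by norm_num) (by norm_num)
    convert this using 2; norm_num
  -- the five pieces
  have p1 := piece 1 (-1.25) (-1) 0.2419 (by norm_num) (by norm_num)
    (h1_helper 1 0.2419 1.64873 (by norm_num) e1 (by norm_num))
    (fun x hx => by simp only [Set.mem_Icc] at hx; nlinarith [hx.1, hx.2])
  have p2 := piece 1.5 (-1.75) (-1.25) 0.1295 (by norm_num) (by norm_num)
    (h1_helper 1.5 0.1295 3.0803 (by norm_num) e2 (by norm_num))
    (fun x hx => by simp only [Set.mem_Icc] at hx; nlinarith [hx.1, hx.2])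
  have p3 := piece 2 (-2.25) (-1.75) 0.0539 (by norm_num) (by norm_num)
    (h1_helper 2 0.0539 7.389057 (by norm_num) e3 (by norm_num))
    (fun x hx => by simp only [Set.mem_Icc] at hx; nlinarith [hx.1, hx.2])
  have p4 := piece 2.5 (-2.75) (-2.25) 0.0175 (by norm_num) (by norm_num)
    (h1_helper 2.5 0.0175 22.761 (by norm_num) e4 (by norm_num))
    (fun x hx => by simp only [Set.mem_Icc] at hx; nlinarith [hx.1, hx.2])
  have p5 := piece 3 (-3.25) (-2.75) 0.00443 (by norm_num) (by norm_num)
    (h1_helper 3 0.00443 90.018 (by norm_num) e5 (by norm_num))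
    (fun x hx => by simp only [Set.mem_Icc] at hx; nlinarith [hx.1, hx.2])
  -- additivity
  have hadd : ∫ x in (-3.25:ℝ)..(-1), gaussianPDFReal 0 1 x =
      (∫ x in (-3.25:ℝ)..(-2.75), gaussianPDFReal 0 1 x) +
      ((∫ x in (-2.75:ℝ)..(-2.25), gaussianPDFReal 0 1 x) +
      ((∫ x in (-2.25:ℝ)..(-1.75), gaussianPDFReal 0 1 x) +
      ((∫ x in (-1.75:ℝ)..(-1.25), gaussianPDFReal 0 1 x) +
      (∫ x in (-1.25:ℝ)..(-1), gaussianPDFReal 0 1 x)))) := by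
    rw [intervalIntegral.integral_add_adjacent_intervals (hii _ _) (hii _ _),
      intervalIntegral.integral_add_adjacent_intervals (hii _ _) (hii _ _),
      intervalIntegral.integral_add_adjacent_intervals (hii _ _) (hii _ _),
      intervalIntegral.integral_add_adjacent_intervals (hii _ _) (hii _ _)]
  have htot : (0.15:ℝ) ≤ ∫ x in (-3.25:ℝ)..(-1), gaussianPDFReal 0 1 x := by
    rw [hadd]
    norm_num at p1 p2 p3 p4 p5 ⊢
    linarith [p1, p2, p3, p4, p5]
  have hIoc : ∫ x in (-3.25:ℝ)..(-1), gaussianPDFReal 0 1 x =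
      ∫ x in Set.Ioc (-3.25:ℝ) (-1), gaussianPDFReal 0 1 x := by
    rw [intervalIntegral.integral_of_le (by norm_num)]
  have hmono : (∫ x in Set.Ioc (-3.25:ℝ) (-1), gaussianPDFReal 0 1 x) ≤
      ∫ x in Set.Iic (-1:ℝ), gaussianPDFReal 0 1 x := by
    refine setIntegral_mono_set ((integrable_gaussianPDFReal 0 1).integrableOn) ?_ ?_
    · exact Filter.Eventually.of_forall fun x => gaussianPDFReal_nonneg 0 1 x
    · exact HasSubset.Subset.eventuallyLE Set.Ioc_subset_Iic_self
  linarith [htot, hIoc ▸ htot, hmono, hIoc.symm ▸ hmono]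

lemma gauss_tail : ENNReal.ofReal 0.15 ≤ gaussianReal 0 1 (Set.Iic (-1:ℝ)) := by
  rw [gaussianReal_apply_eq_integral 0 (by norm_num) (Set.Iic (-1:ℝ))]
  exact ENNReal.ofReal_le_ofReal tail_int
end AuxNum


lemma withDensity_map_equiv {α β : Type*} [MeasurableSpace α] [MeasurableSpace β]
    (μ : Measure α) (e : α ≃ᵐ β) {g : β → ℝ≥0∞} (hg : Measurable g) :
    (μ.withDensity (g ∘ e)).map e = (μ.map e).withDensity g := by
  ext s hs
  rw [Measure.map_apply e.measurable hs, withDensity_apply _ (e.measurable hs),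
    withDensity_apply _ hs, setLIntegral_map hs hg e.measurable]
  rfl

lemma lintegral_pi_prod : ∀ (n : ℕ) (μ : Fin n → Measure ℝ), (∀ i, SigmaFinite (μ i)) →
    ∀ (f : Fin n → ℝ → ℝ≥0∞), (∀ i, Measurable (f i)) →
    ∫⁻ z, ∏ i, f i (z i) ∂Measure.pi μ = ∏ i, ∫⁻ x, f i x ∂μ i := by
  intro n
  induction n with
  | zero =>
    intro μ _ f _
    simp only [Finset.univ_eq_empty, Finset.prod_empty, lintegral_one]
    haveI : ∀ i, SigmaFinite (μ i) := fun i => i.elim0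
    rw [Measure.pi_univ]
    simp
  | succ n ih =>
    intro μ hμ f hf
    haveI := hμ
    have mp := (measurePreserving_piFinSuccAbove μ 0).symm
    rw [← mp.lintegral_comp (f := fun z => ∏ i, f i (z i))
      (Finset.measurable_prod _ (fun i _ => (hf i).comp (measurable_pi_apply i)))]
    have key : ∀ w : ℝ × (Fin n → ℝ),
        (∏ i, f i (((MeasurableEquiv.piFinSuccAbove (fun _ => ℝ) 0).symm w) i)) =
        f 0 w.1 * ∏ j, f (Fin.succ j) (w.2 j) := by
      rintro ⟨a, y⟩
      rw [Fin.prod_univ_succ]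
      have h2 : ∀ j : Fin n,
          Fin.insertNth (α := fun _ : Fin (n+1) => ℝ) 0 a y (Fin.succ j) = y j := fun j => by
        have h3 := Fin.insertNth_apply_succAbove (α := fun _ : Fin (n+1) => ℝ) 0 a y j
        simpa using h3
      simp only [MeasurableEquiv.piFinSuccAbove_symm_apply, Fin.insertNthEquiv_zero,
        Fin.consEquiv_apply, Fin.cons_zero, Fin.cons_succ]
    simp_rw [key]
    calc ∫⁻ a : ℝ × (Fin n → ℝ), f 0 a.1 * ∏ j, f (Fin.succ j) (a.2 j)
          ∂(μ 0).prod (Measure.pi fun j => μ (Fin.succAbove 0 j))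
        = (∫⁻ x, f 0 x ∂μ 0) *
          ∫⁻ y, ∏ j, f (Fin.succ j) (y j) ∂Measure.pi (fun j => μ (Fin.succAbove 0 j)) :=
        lintegral_prod_mul ((hf 0).aemeasurable)
          ((Finset.measurable_prod _
            (fun j _ => (hf (Fin.succ j)).comp (measurable_pi_apply j))).aemeasurable)
      _ = (∫⁻ x, f 0 x ∂μ 0) * ∏ j, ∫⁻ x, f (Fin.succ j) x ∂μ (Fin.succAbove 0 j) :=
        by rw [ih _ (fun j => hμ _) _ (fun j => hf (Fin.succ j))]
      _ = ∏ i, ∫⁻ x, f i x ∂μ i := by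
        rw [Fin.prod_univ_succ]
        simp [Fin.succAbove_zero]

lemma pi_gaussian_withDensity (n : ℕ) :
    (Measure.pi fun _ : Fin n => gaussianReal 0 1) =
    (Measure.pi fun _ : Fin n => (volume : Measure ℝ)).withDensity
      (fun z => ∏ i, gaussianPDF 0 1 (z i)) := by
  refine Measure.pi_eq (fun s hs => ?_)
  rw [withDensity_apply _ (MeasurableSet.univ_pi hs)]
  have hind : (Set.univ.pi s).indicator (fun z => ∏ i, gaussianPDF 0 1 (z i)) =
      fun z => ∏ i, (s i).indicator (gaussianPDF 0 1) (z i) := by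
    funext z
    by_cases hz : z ∈ Set.univ.pi s
    · rw [Set.indicator_of_mem hz]
      refine Finset.prod_congr rfl (fun i _ => ?_)
      rw [Set.indicator_of_mem (hz i (Set.mem_univ i))]
    · rw [Set.indicator_of_notMem hz]
      rw [Set.mem_univ_pi] at hz
      push_neg at hz
      obtain ⟨i, hi⟩ := hz
      exact (Finset.prod_eq_zero (Finset.mem_univ i)
        (by rw [Set.indicator_of_notMem hi])).symm
  rw [← lintegral_indicator (MeasurableSet.univ_pi hs), hind,
    lintegral_pi_prod n (fun _ => volume) (fun _ => inferInstance) _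
      (fun i => (measurable_gaussianPDF 0 1).indicator (hs i))]
  refine Finset.prod_congr rfl (fun i _ => ?_)
  rw [lintegral_indicator (hs i), gaussianReal_apply 0 (one_ne_zero) (s i)]

def gaussDens (d : ℕ) : Ed d → ℝ≥0∞ := fun z =>
  ENNReal.ofReal ((Real.sqrt (2 * Real.pi))⁻¹ ^ d * Real.exp (-‖z‖^2/2))

lemma gaussDens_measurable : Measurable (gaussDens d) := by
  apply ENNReal.measurable_ofReal.comp
  fun_prop


lemma stdGaussian_eq_withDensity (d : ℕ) :
    stdGaussian d = (volume : Measure (Ed d)).withDensity (gaussDens d) := by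
  have hfun : (fun z : Fin d → ℝ => ∏ i, gaussianPDF 0 1 (z i)) =
      (gaussDens d) ∘ (MeasurableEquiv.toLp 2 (Fin d → ℝ)) := by
    funext w
    have hnorm : ‖(MeasurableEquiv.toLp 2 (Fin d → ℝ)) w‖^2 = ∑ i, (w i)^2 := by
      rw [EuclideanSpace.norm_eq, Real.sq_sqrt (by positivity)]
      refine Finset.sum_congr rfl (fun i _ => ?_)
      rw [Real.norm_eq_abs, sq_abs]
      rfl
    show ∏ i, gaussianPDF 0 1 (w i) = ENNReal.ofReal _
    rw [gaussianPDF_def]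
    rw [← ENNReal.ofReal_prod_of_nonneg (fun i _ => gaussianPDFReal_nonneg 0 1 (w i))]
    congr 1
    simp_rw [pdf_formula]
    rw [Finset.prod_mul_distrib, Finset.prod_const, ← Real.exp_sum, Finset.card_univ,
      Fintype.card_fin, hnorm]
    congr 1
    simp [neg_div, Finset.sum_div, Finset.sum_neg_distrib]
  rw [_root_.stdGaussian, pi_gaussian_withDensity, hfun,
    withDensity_map_equiv _ _ gaussDens_measurable,
    ← MeasureTheory.volume_pi,
    MeasurableEquiv.coe_toLp, (PiLp.volume_preserving_toLp (Fin d)).map_eq]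

lemma stdGaussian_map_isometry (T : Ed d ≃ₗᵢ[ℝ] Ed d) :
    (stdGaussian d).map T = stdGaussian d := by
  have hdens : gaussDens d ∘ (T.toHomeomorph.toMeasurableEquiv : Ed d → Ed d) = gaussDens d := by
    funext z
    show gaussDens d (T z) = gaussDens d z
    unfold gaussDens
    rw [T.norm_map]
  have hcoe : ((T.toHomeomorph.toMeasurableEquiv : Ed d ≃ᵐ Ed d) : Ed d → Ed d) = ⇑T := rfl
  rw [stdGaussian_eq_withDensity]
  calc (volume.withDensity (gaussDens d)).map ⇑T
      = (volume.withDensity (gaussDens d ∘ ⇑T.toHomeomorph.toMeasurableEquiv)).map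
        ⇑T.toHomeomorph.toMeasurableEquiv := by rw [hdens, hcoe]
    _ = (volume.map ⇑T.toHomeomorph.toMeasurableEquiv).withDensity (gaussDens d) :=
        withDensity_map_equiv _ _ gaussDens_measurable
    _ = volume.withDensity (gaussDens d) := by
        rw [hcoe, T.measurePreserving.map_eq]

lemma stdGaussian_map_coord (i : Fin d) :
    (stdGaussian d).map (fun z : Ed d => z i) = gaussianReal 0 1 := by
  have hm : Measurable (fun z : Ed d => z i) :=
    (measurable_pi_apply i).comp (MeasurableEquiv.toLp 2 (Fin d → ℝ)).symm.measurable
  rw [_root_.stdGaussian, Measure.map_map hm (MeasurableEquiv.measurable _)]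
  have : ((fun z : Ed d => z i) ∘ ⇑(MeasurableEquiv.toLp 2 (Fin d → ℝ))) =
      Function.eval i := rfl
  rw [this]
  ext s hs
  rw [Measure.map_apply (measurable_pi_apply i) hs, Set.eval_preimage, Measure.pi_pi]
  refine Finset.prod_eq_single_of_mem i (Finset.mem_univ i) (fun j _ hj => ?_) |>.trans ?_
  · rw [Function.update_of_ne hj]
    exact measure_univ
  · rw [Function.update_self]

lemma stdGaussian_map_inner (hd : 1 ≤ d) (v : Ed d) (hv : ‖v‖ = 1) :
    (stdGaussian d).map (fun z : Ed d => ⟪v, z⟫) = gaussianReal 0 1 := by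
  have hinner : Measurable fun z : Ed d => ⟪v, z⟫ :=
    (continuous_const.inner continuous_id).measurable
  set i₀ : Fin d := ⟨0, hd⟩
  set e₀ : Ed d := EuclideanSpace.single i₀ (1:ℝ) with he₀
  have hne : ‖e₀‖ = ‖v‖ := by rw [he₀, EuclideanSpace.norm_single, hv, norm_one]
  set T := Submodule.reflection (Submodule.span ℝ {e₀ - v})ᗮ with hT
  have hTe : T e₀ = v := Submodule.reflection_sub hne
  have hcomp : (fun z : Ed d => ⟪v, z⟫) ∘ ⇑T = fun z : Ed d => z i₀ := by
    funext z
    show ⟪v, T z⟫ = z i₀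
    rw [← hTe, T.inner_map_map, he₀]
    have := EuclideanSpace.inner_single_left (𝕜 := ℝ) i₀ (1:ℝ) z
    rw [this]
    simp
  rw [← stdGaussian_map_isometry T, Measure.map_map hinner T.measurePreserving.measurable,
    hcomp, stdGaussian_map_coord]

instance {d : ℕ} : IsProbabilityMeasure (stdGaussian d) :=
  Measure.isProbabilityMeasure_map (MeasurableEquiv.measurable _).aemeasurable

instance : IsProbabilityMeasure unif01 :=
  ⟨by rw [unif01, Measure.restrict_apply_univ, Real.volume_Ioc]; norm_num⟩

lemma unif01_Ioc : unif01 (Set.Ioc (0:ℝ) 1) = 1 := by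
  rw [unif01, Measure.restrict_apply measurableSet_Ioc, Set.inter_self, Real.volume_Ioc]
  norm_num

lemma stdGaussian_halfspace {d : ℕ} (hd : 1 ≤ d) (v : Ed d) (hv : ‖v‖ = 1) :
    ENNReal.ofReal 0.15 ≤ stdGaussian d {z : Ed d | ⟪v, z⟫ ≤ -1} := by
  have hinner : Measurable fun z : Ed d => ⟪v, z⟫ :=
    (continuous_const.inner continuous_id).measurable
  have hset : {z : Ed d | ⟪v, z⟫ ≤ -1} = (fun z : Ed d => ⟪v, z⟫) ⁻¹' (Set.Iic (-1)) := rfl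
  rw [hset, ← Measure.map_apply hinner measurableSet_Iic, stdGaussian_map_inner hd v hv]
  exact gauss_tail

/-- Lemma 2.9 (vii): there is a universal constant `p₀ ∈ (0,1)`,
`p₀ ≥ 0.15`, such that under (C1), (C2), (C3) and `h ≤ 1/L`,
`π(x,y) ≥ p₀·1_{r ≤ √h}` for the coupled Euler transition steps. -/
theorem stmt12 :
    ∃ p₀ : ℝ, p₀ ∈ Set.Ioo (0:ℝ) 1 ∧ 0.15 ≤ p₀ ∧
      ∀ d : ℕ, 1 ≤ d → ∀ h : ℝ, 0 < h → ∀ b : Ed d → Ed d, Measurable b →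
      ∀ J K L 𝓡 : ℝ, 0 ≤ J → 0 < K → 0 < L → 0 < 𝓡 →
        CondC1 b J → CondC2 b K 𝓡 → CondC3 b L → h ≤ 1 / L →
      ∀ x y : Ed d,
        (if ‖x - y‖ ≤ Real.sqrt h then p₀ else 0) ≤ piE h b x y := by
  refine ⟨0.15, ⟨by norm_num, by norm_num⟩, le_refl _, ?_⟩
  intro d hd h hh b hb J K L 𝓡 hJ hK hL hR hC1 hC2 hC3 hhL x y
  by_cases hr : ‖x - y‖ ≤ Real.sqrt h
  · rw [if_pos hr]
    have hsqrt : 0 < Real.sqrt h := Real.sqrt_pos.mpr hh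
    -- measurability of the coupling map
    have hXc : Continuous (fun zu : Ed d × ℝ => hatPt h b x + Real.sqrt h • zu.1) := by
      fun_prop
    have hFc : Continuous (fun zu : Ed d × ℝ =>
        densRatio h (hatPt h b x) (hatPt h b y) (hatPt h b x + Real.sqrt h • zu.1)) := by
      unfold densRatio
      fun_prop
    have hRc : Continuous (fun zu : Ed d × ℝ =>
        reflPt h (hatPt h b x) (hatPt h b y) zu.1) := by
      unfold reflPt
      have h1 : Continuous fun zu : Ed d × ℝ =>
          (inner ℝ (‖hatPt h b x - hatPt h b y‖⁻¹ • (hatPt h b x - hatPt h b y)) zu.1 : ℝ) :=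
        continuous_const.inner continuous_fst
      fun_prop
    have hScond : MeasurableSet {zu : Ed d × ℝ |
        zu.2 ≤ densRatio h (hatPt h b x) (hatPt h b y) (hatPt h b x + Real.sqrt h • zu.1)} :=
      measurableSet_le measurable_snd hFc.measurable
    have hcpl : Measurable (cplMap h b x y) := by
      unfold cplMap
      exact (hXc.measurable).prodMk (Measurable.ite hScond hXc.measurable hRc.measurable)
    have hD : MeasurableSet {w : Ed d × Ed d | w.1 = w.2} :=
      (isClosed_eq continuous_fst continuous_snd).measurableSet
    have hmap : cplMeasure h b x y {w | w.1 = w.2} =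
        ((stdGaussian d).prod unif01) (cplMap h b x y ⁻¹' {w | w.1 = w.2}) := by
      rw [cplMeasure, Measure.map_apply hcpl hD]
    have key : ENNReal.ofReal 0.15 ≤
        ((stdGaussian d).prod unif01) (cplMap h b x y ⁻¹' {w | w.1 = w.2}) := by
      by_cases hxy : hatPt h b x = hatPt h b y
      · have hsub : (Set.univ : Set (Ed d)) ×ˢ Set.Ioc (0:ℝ) 1 ⊆
            cplMap h b x y ⁻¹' {w | w.1 = w.2} := by
          rintro ⟨z, u⟩ ⟨-, hu⟩
          have hcond : u ≤ densRatio h (hatPt h b x) (hatPt h b y)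
              (hatPt h b x + Real.sqrt h • z) := by
            rw [hxy, densRatio, sub_self, zero_div, Real.exp_zero]
            exact hu.2
          show (cplMap h b x y (z, u)).1 = (cplMap h b x y (z, u)).2
          simp only [cplMap]
          rw [if_pos hcond]
        calc ENNReal.ofReal 0.15 ≤ 1 := ENNReal.ofReal_le_one.mpr (by norm_num)
          _ = ((stdGaussian d).prod unif01) (Set.univ ×ˢ Set.Ioc (0:ℝ) 1) := by
              rw [Measure.prod_prod, measure_univ, unif01_Ioc, one_mul]
          _ ≤ _ := measure_mono hsub
      · have hrpos : (0:ℝ) < ‖hatPt h b x - hatPt h b y‖ := by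
          rw [norm_pos_iff, sub_ne_zero]
          exact hxy
        have hvnorm : ‖(‖hatPt h b x - hatPt h b y‖⁻¹ • (hatPt h b x - hatPt h b y) : Ed d)‖
            = 1 := by
          rw [norm_smul, norm_inv, norm_norm, inv_mul_cancel₀ hrpos.ne']
        have hrl : ‖hatPt h b x - hatPt h b y‖ ≤ 2 * Real.sqrt h := by
          have hdiff : hatPt h b x - hatPt h b y = (x - y) + h • (b x - b y) := by
            rw [hatPt, hatPt, smul_sub]
            abel
          have h1 : ‖hatPt h b x - hatPt h b y‖ ≤ ‖x - y‖ + h * ‖b x - b y‖ := by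
            rw [hdiff]
            refine (norm_add_le _ _).trans ?_
            rw [norm_smul, Real.norm_eq_abs, abs_of_pos hh]
          have h2 : ‖b x - b y‖ ≤ L * ‖x - y‖ := hC3 x y
          have h3 : h * L ≤ 1 := by
            rw [le_div_iff₀ hL] at hhL
            exact hhL
          have h4 : h * ‖b x - b y‖ ≤ h * (L * ‖x - y‖) :=
            mul_le_mul_of_nonneg_left h2 hh.le
          nlinarith [norm_nonneg (x - y), Real.sqrt_nonneg h]
        have hsub : {z : Ed d | ⟪(‖hatPt h b x - hatPt h b y‖⁻¹ •
              (hatPt h b x - hatPt h b y) : Ed d), z⟫ ≤ -1} ×ˢ Set.Ioc (0:ℝ) 1 ⊆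
            cplMap h b x y ⁻¹' {w | w.1 = w.2} := by
          rintro ⟨z, u⟩ ⟨hz, hu⟩
          simp only [Set.mem_setOf_eq] at hz
          have hzin : ⟪hatPt h b x - hatPt h b y, z⟫ = ‖hatPt h b x - hatPt h b y‖ *
              ⟪(‖hatPt h b x - hatPt h b y‖⁻¹ • (hatPt h b x - hatPt h b y) : Ed d), z⟫ := by
            conv_lhs => rw [show hatPt h b x - hatPt h b y = ‖hatPt h b x - hatPt h b y‖ •
              (‖hatPt h b x - hatPt h b y‖⁻¹ • (hatPt h b x - hatPt h b y)) from by
                rw [smul_smul, mul_inv_cancel₀ hrpos.ne', one_smul]]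
            rw [real_inner_smul_left]
          have hcond : u ≤ densRatio h (hatPt h b x) (hatPt h b y)
              (hatPt h b x + Real.sqrt h • z) := by
            have hnum : 0 ≤ ‖hatPt h b x + Real.sqrt h • z - hatPt h b x‖^2
                - ‖hatPt h b x + Real.sqrt h • z - hatPt h b y‖^2 := by
              have e1 : hatPt h b x + Real.sqrt h • z - hatPt h b x = Real.sqrt h • z := by
                abel
              have e2 : hatPt h b x + Real.sqrt h • z - hatPt h b y
                  = (hatPt h b x - hatPt h b y) + Real.sqrt h • z := by
                abel
              rw [e1, e2, norm_add_sq_real, real_inner_smul_right, hzin]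
              nlinarith [mul_nonneg (sub_nonneg.mpr hrl) hrpos.le,
                mul_nonneg (mul_nonneg hsqrt.le hrpos.le)
                  (by linarith :
                    (0:ℝ) ≤ -(⟪(‖hatPt h b x - hatPt h b y‖⁻¹ •
                      (hatPt h b x - hatPt h b y) : Ed d), z⟫) - 1)]
            rw [densRatio]
            have hq : 0 ≤ (‖hatPt h b x + Real.sqrt h • z - hatPt h b x‖^2
                - ‖hatPt h b x + Real.sqrt h • z - hatPt h b y‖^2) / (2*h) :=
              div_nonneg hnum (by positivity)
            calc u ≤ 1 := hu.2
              _ ≤ _ := Real.one_le_exp hq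
          show (cplMap h b x y (z, u)).1 = (cplMap h b x y (z, u)).2
          simp only [cplMap]
          rw [if_pos hcond]
        calc ENNReal.ofReal 0.15
            ≤ stdGaussian d {z : Ed d | ⟪(‖hatPt h b x - hatPt h b y‖⁻¹ •
              (hatPt h b x - hatPt h b y) : Ed d), z⟫ ≤ -1} :=
              stdGaussian_halfspace hd _ hvnorm
          _ = stdGaussian d {z : Ed d | ⟪(‖hatPt h b x - hatPt h b y‖⁻¹ •
              (hatPt h b x - hatPt h b y) : Ed d), z⟫ ≤ -1} * unif01 (Set.Ioc 0 1) := by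
              rw [unif01_Ioc, mul_one]
          _ = ((stdGaussian d).prod unif01) ({z : Ed d | ⟪(‖hatPt h b x - hatPt h b y‖⁻¹ •
              (hatPt h b x - hatPt h b y) : Ed d), z⟫ ≤ -1} ×ˢ Set.Ioc (0:ℝ) 1) :=
              (Measure.prod_prod _ _).symm
          _ ≤ _ := measure_mono hsub
    have hfin : cplMeasure h b x y {w | w.1 = w.2} ≠ ⊤ := by
      rw [hmap]
      exact (measure_lt_top _ _).ne
    rw [piE]
    calc (0.15:ℝ) = (ENNReal.ofReal 0.15).toReal := by
          rw [ENNReal.toReal_ofReal]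
          norm_num
      _ ≤ _ := ENNReal.toReal_mono hfin (hmap ▸ key)
  · rw [if_neg hr]
    exact ENNReal.toReal_nonneg

end
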